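/- In the Galois setup, let σ′, τ′ ∈ Stab(T) be such that the pullback pairs p^*σ′ and p^*τ′ are locally finite stability conditions on T_L. Then d(p^*σ′, p^*τ′) ≤ d(σ′, τ′) in [0,∞]. -/

import Mathlib

open CategoryTheory Limits Pretriangulated ENNReal

noncomputable section

namespace StabilityPaper

universe v u v₂ u₂ v₃ u₃

/-- The data of a "prestability condition": a central charge, given as a function on
objects (which, when required to be additive on distinguished triangles, is the same
as a group homomorphism `K(T) → ℂ` on the Grothendieck group), and a collection of
sets of objects `P φ` for `φ ∈ ℝ`. -/
structure PreStab (C : Type u) where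
  Z : C → ℂ
  P : ℝ → Set C

section Triangulated

variable {C : Type u} [Category.{v} C] [Preadditive C] [HasZeroObject C] [HasShift C ℤ]
  [∀ n : ℤ, (shiftFunctor C n).Additive] [Pretriangulated C] [HasFiniteBiproducts C]

/-- A Harder–Narasimhan filtration of `E` with respect to the collection of
subcategories `P`: distinguished triangles `E_{i-1} → E_i → A_i` with `E_0 = 0`,
`E_n ≅ E`, `A_i` a nonzero object of `P (φ i)` and strictly decreasing phases `φ`. -/
structure HNFiltration (P : ℝ → Set C) (E : C) where
  n : ℕ
  npos : 0 < n
  Fil : Fin (n + 1) → C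
  A : Fin n → C
  phi : Fin n → ℝ
  fil_zero : IsZero (Fil 0)
  fil_last : Nonempty (Fil (Fin.last n) ≅ E)
  A_mem : ∀ i, A i ∈ P (phi i)
  A_ne : ∀ i, ¬ IsZero (A i)
  phi_anti : StrictAnti phi
  tri : ∀ i : Fin n, ∃ (f : Fil i.castSucc ⟶ Fil i.succ) (g : Fil i.succ ⟶ A i)
    (h : A i ⟶ (Fil i.castSucc)⟦(1 : ℤ)⟧), Triangle.mk f g h ∈ distTriang C

/-- The condition that the subcategories `P φ` are strictly full additive
subcategories. -/
structure IsSlicing (P : ℝ → Set C) : Prop where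
  iso_mem : ∀ (φ : ℝ) (X Y : C), Nonempty (X ≅ Y) → X ∈ P φ → Y ∈ P φ
  zero_mem : ∀ (φ : ℝ) (X : C), IsZero X → X ∈ P φ
  sum_mem : ∀ (φ : ℝ) (X Y : C), X ∈ P φ → Y ∈ P φ → (X ⊞ Y) ∈ P φ

/-- The axioms (SC1)-(SC4) of a stability condition on a triangulated category,
together with the requirements that the `P φ` are strictly full additive subcategories
and that `Z` is additive on distinguished triangles (i.e. descends to a group
homomorphism on the Grothendieck group). -/
structure IsStabCond (σ : PreStab C) : Prop where
  slicing : IsSlicing σ.P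
  zadd : ∀ T ∈ distTriang C, σ.Z T.obj₂ = σ.Z T.obj₁ + σ.Z T.obj₃
  sc1 : ∀ (φ : ℝ) (E : C), E ∈ σ.P φ → ¬ IsZero E →
    ∃ m : ℝ, 0 < m ∧ σ.Z E = (m : ℂ) * Complex.exp ((Real.pi : ℂ) * φ * Complex.I)
  sc2 : ∀ (φ : ℝ) (E : C), (E⟦(1 : ℤ)⟧ ∈ σ.P (φ + 1)) ↔ E ∈ σ.P φ
  sc3 : ∀ (φ₁ φ₂ : ℝ), φ₂ < φ₁ → ∀ E₁ ∈ σ.P φ₁, ∀ E₂ ∈ σ.P φ₂, ∀ f : E₁ ⟶ E₂, f = 0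
  sc4 : ∀ E : C, ¬ IsZero E → Nonempty (HNFiltration σ.P E)

/-- The extension-closed subcategory generated by a set of objects. -/
inductive extClosure (S : Set C) : C → Prop
  | of {X : C} : X ∈ S → extClosure S X
  | zero {X : C} : IsZero X → extClosure S X
  | iso {X Y : C} : (X ≅ Y) → extClosure S X → extClosure S Y
  | ext (T : Triangle C) (hT : T ∈ distTriang C) (h₁ : extClosure S T.obj₁)
      (h₃ : extClosure S T.obj₃) : extClosure S T.obj₂

/-- `A` is a strict subobject of `B` inside the subcategory `𝒜`: there is a
distinguished triangle `A → B → Q` with `Q` a nonzero object of `𝒜`. -/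
def StrictSubIn (𝒜 : Set C) (A B : C) : Prop :=
  A ∈ 𝒜 ∧ B ∈ 𝒜 ∧ ∃ (f : A ⟶ B) (Q : C) (g : B ⟶ Q) (h : Q ⟶ A⟦(1 : ℤ)⟧),
    Q ∈ 𝒜 ∧ ¬ IsZero Q ∧ Triangle.mk f g h ∈ distTriang C

/-- `B` is a strict quotient of `A` inside the subcategory `𝒜`: there is a
distinguished triangle `K → A → B` with `K` a nonzero object of `𝒜`. -/
def StrictQuotIn (𝒜 : Set C) (A B : C) : Prop :=
  A ∈ 𝒜 ∧ B ∈ 𝒜 ∧ ∃ (K : C) (f : K ⟶ A) (g : A ⟶ B) (h : B ⟶ K⟦(1 : ℤ)⟧),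
    K ∈ 𝒜 ∧ ¬ IsZero K ∧ Triangle.mk f g h ∈ distTriang C

/-- A subcategory is of finite length if it is Artinian (no infinite chains of strict
subobjects) and Noetherian (no infinite chains of strict quotients). -/
def FiniteLengthIn (𝒜 : Set C) : Prop :=
  (¬ ∃ c : ℕ → C, ∀ n, StrictSubIn 𝒜 (c (n + 1)) (c n)) ∧
  (¬ ∃ c : ℕ → C, ∀ n, StrictQuotIn 𝒜 (c n) (c (n + 1)))

/-- Local finiteness of a prestability condition. -/
def LocallyFinite (σ : PreStab C) : Prop :=
  ∃ ε : ℝ, 0 < ε ∧ ∀ φ : ℝ,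
    FiniteLengthIn (setOf (extClosure (⋃ ψ ∈ Set.Ioo (φ - ε) (φ + ε), σ.P ψ)))

/-- A locally finite stability condition. -/
def IsStabilityCondition (σ : PreStab C) : Prop :=
  IsStabCond σ ∧ LocallyFinite σ

variable (C) in
/-- The set of locally finite stability conditions on `C`. -/
abbrev Stab := {σ : PreStab C // IsStabilityCondition σ}

/-- The largest phase `φ⁺(E)` appearing in a Harder–Narasimhan filtration of `E`
(well defined, by uniqueness of Harder–Narasimhan filtrations, for a stability
condition; here defined as a supremum over all HN filtrations). -/
def phiPlus (σ : PreStab C) (E : C) : ℝ :=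
  sSup {x | ∃ h : HNFiltration σ.P E, x = h.phi ⟨0, h.npos⟩}

/-- The smallest phase `φ⁻(E)` appearing in a Harder–Narasimhan filtration of `E`. -/
def phiMinus (σ : PreStab C) (E : C) : ℝ :=
  sSup {x | ∃ h : HNFiltration σ.P E, x = h.phi ⟨h.n - 1, Nat.sub_lt h.npos one_pos⟩}

/-- The mass `m_σ(E) = ∑ |Z(A_i)|` of an object. -/
def mass (σ : PreStab C) (E : C) : ℝ :=
  sSup {x | ∃ h : HNFiltration σ.P E, x = ∑ i, ‖σ.Z (h.A i)‖}

/-- Bridgeland's generalized metric on the space of stability conditions, with values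
in `[0, ∞]`. -/
def stabDist (σ τ : PreStab C) : ℝ≥0∞ :=
  ⨆ E : {E : C // ¬ IsZero E},
    ENNReal.ofReal (max |phiMinus σ E.1 - phiMinus τ E.1|
      (max |phiPlus σ E.1 - phiPlus τ E.1| |Real.log (mass σ E.1 / mass τ E.1)|))

/-- The topology induced by the generalized metric: the topology generated by
open balls. -/
instance : TopologicalSpace (Stab C) :=
  TopologicalSpace.generateFrom
    {U | ∃ (σ : Stab C) (r : ℝ≥0∞), U = {τ : Stab C | stabDist σ.1 τ.1 < r}}

end Triangulated

section Functoriality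

variable {C : Type u} [Category.{v} C] {D : Type u₂} [Category.{v₂} D]

/-- Given a functor `p : C ⥤ D` and a prestability condition `σ` on `D`, the
"pushforward" prestability condition on `C`: its central charge is `Z ∘ K(p)` and its
slicing is `P' φ = {E | p(E) ∈ P φ}`.  (When `p = p^* : D^b(X) → D^b(X_L)`, this is the
pushforward `p_* σ` of a stability condition on `X_L`; when `p = p_* : D^b(X_L) → D^b(X)`,
this is the pullback `p^* σ` of a stability condition on `X`.) -/
def pushforward (p : C ⥤ D) (σ : PreStab D) : PreStab C where
  Z E := σ.Z (p.obj E)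
  P φ := {E | p.obj E ∈ σ.P φ}

end Functoriality

section GroupAction

variable {C : Type u} [Category.{v} C] {G : Type} [Group G]

/-- The action of a group element `g` on prestability conditions:
`g • (Z, P) = (Z ∘ K(g_*), g^* P)`, where `g_* = (g⁻¹)^*` and `(g^* P)(φ)` is the
strictly full image of `P φ` under `g^*`. -/
def gAct (gst : G → C ⥤ C) (g : G) (σ : PreStab C) : PreStab C where
  Z E := σ.Z ((gst g⁻¹).obj E)
  P φ := {E | ∃ X ∈ σ.P φ, Nonempty ((gst g).obj X ≅ E)}

/-- The cocycle condition for a `G`-linearization `lam` of an object `X`. -/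
def CocycleLin (gst : G → C ⥤ C) (actMul : ∀ g h : G, gst h ⋙ gst g ≅ gst (g * h))
    (X : C) (lam : ∀ g : G, X ≅ (gst g).obj X) : Prop :=
  ∀ g h : G, (lam (g * h)).hom =
    (lam g).hom ≫ (gst g).map ((lam h).hom) ≫ (actMul g h).hom.app X

/-- Compatibility of a morphism with `G`-linearizations of its source and target. -/
def LinHomCompat (gst : G → C ⥤ C) {X Y : C}
    (lamX : ∀ g : G, X ≅ (gst g).obj X) (lamY : ∀ g : G, Y ≅ (gst g).obj Y)
    (f : X ⟶ Y) : Prop :=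
  ∀ g : G, f ≫ (lamY g).hom = (lamX g).hom ≫ (gst g).map f

/-- A function on objects which is additive on distinguished triangles; this is the
same as a group homomorphism on the Grothendieck group. -/
def AdditiveOnTriangles {C : Type u₂} [Category.{v₂} C] [Preadditive C] [HasZeroObject C]
    [HasShift C ℤ] [∀ n : ℤ, (shiftFunctor C n).Additive] [Pretriangulated C]
    (U : C → ℂ) : Prop :=
  ∀ T ∈ distTriang C, U T.obj₂ = U T.obj₁ + U T.obj₃

/-- Bridgeland's generalized norm `‖U‖_σ` on central charges, with values in `[0,∞]`:
the supremum over nonzero `σ`-semistable objects `E` of `|U(E)|/|Z(E)|`. -/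
noncomputable def stabNorm (σ : PreStab C) (U : C → ℂ) : ℝ≥0∞ :=
  ⨆ E : {E : C // ¬ IsZero E ∧ ∃ φ : ℝ, E ∈ σ.P φ},
    ENNReal.ofReal (‖U E.1‖ / ‖σ.Z E.1‖)

end GroupAction

section Descent

variable {C₁ : Type u} [Category.{v} C₁] {C₂ : Type u₂} [Category.{v₂} C₂]
  {G : Type} [Group G]

/-- The Galois descent hypothesis: the natural functor from `T` to the category of
`G`-linearized objects of `T_L`, sending `E` to `p^* E` with its canonical
linearization, is an equivalence of categories.  This is expressed by saying that it
is fully faithful (morphisms compatible with the linearizations descend uniquely) and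
essentially surjective (every `G`-linearized object is isomorphic, compatibly with the
linearizations, to some `p^* E` with its canonical linearization). -/
def GaloisDescent (pstar : C₁ ⥤ C₂) (gst : G → C₂ ⥤ C₂)
    (actMul : ∀ g h : G, gst h ⋙ gst g ≅ gst (g * h))
    (pIso : ∀ g : G, pstar ≅ pstar ⋙ gst g) : Prop :=
  (∀ (E F : C₁) (f' : pstar.obj E ⟶ pstar.obj F),
      LinHomCompat gst (fun g => (pIso g).app E) (fun g => (pIso g).app F) f' →
      ∃! f : E ⟶ F, pstar.map f = f') ∧
  (∀ (X : C₂) (lam : ∀ g : G, X ≅ (gst g).obj X), CocycleLin gst actMul X lam →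
      ∃ (E : C₁) (u : pstar.obj E ≅ X),
        LinHomCompat gst (fun g => (pIso g).app E) lam u.hom)

end Descent



/-! ### Auxiliary material for the proof of Statement 1 -/

section Aux

lemma sSup_sub_eq (S T : Set ℝ) (hST : S ⊆ T) (hS : S.Nonempty)
    (hT : ∀ x ∈ T, ∀ y ∈ T, x = y) : sSup S = sSup T := by
  obtain ⟨v, hv⟩ := hS
  have hTv : T = {v} := Set.eq_singleton_iff_unique_mem.mpr
    ⟨hST hv, fun x hx => hT x hx v (hST hv)⟩
  have hSv : S = {v} := Set.eq_singleton_iff_unique_mem.mpr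
    ⟨hv, fun x hx => hT x (hST hx) v (hST hv)⟩
  rw [hSv, hTv]

lemma sum_split {M : Type*} [AddCommMonoid M] {n : ℕ} (hn : 0 < n) (G : Fin n → M) :
    ∑ i, G i = (∑ j : Fin (n - 1), G ⟨j.1, lt_of_lt_of_le j.2 (Nat.sub_le n 1)⟩) +
      G ⟨n - 1, Nat.sub_lt hn one_pos⟩ := by
  obtain ⟨m, rfl⟩ : ∃ m, n = m + 1 := ⟨n - 1, by omega⟩
  exact Fin.sum_univ_castSucc G

end Aux

section HNUniqueness

variable {C : Type u} [Category.{v} C] [Preadditive C] [HasZeroObject C] [HasShift C ℤ]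
  [∀ n : ℤ, (shiftFunctor C n).Additive] [Pretriangulated C] [HasFiniteBiproducts C]

namespace HNFiltration

variable {P : ℝ → Set C} {E : C}

/-- A choice of first morphism in the `i`-th triangle of a HN filtration. -/
def fmor (h : HNFiltration P E) (i : Fin h.n) : h.Fil i.castSucc ⟶ h.Fil i.succ :=
  (h.tri i).choose

/-- A choice of second morphism in the `i`-th triangle of a HN filtration. -/
def gmor (h : HNFiltration P E) (i : Fin h.n) : h.Fil i.succ ⟶ h.A i :=
  (h.tri i).choose_spec.choose

/-- A choice of third morphism in the `i`-th triangle of a HN filtration. -/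
def wmor (h : HNFiltration P E) (i : Fin h.n) : h.A i ⟶ (h.Fil i.castSucc)⟦(1 : ℤ)⟧ :=
  (h.tri i).choose_spec.choose_spec.choose

lemma dist (h : HNFiltration P E) (i : Fin h.n) :
    Triangle.mk (h.fmor i) (h.gmor i) (h.wmor i) ∈ distTriang C :=
  (h.tri i).choose_spec.choose_spec.choose_spec

/-- The last index. -/
def lastI (h : HNFiltration P E) : Fin h.n := ⟨h.n - 1, Nat.sub_lt h.npos one_pos⟩

lemma lastI_succ (h : HNFiltration P E) : h.lastI.succ = Fin.last h.n := by
  have := h.npos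
  refine Fin.ext ?_
  simp [lastI]
  omega

/-- The isomorphism between the top of the filtration and `E`. -/
def topIso (h : HNFiltration P E) : h.Fil h.lastI.succ ≅ E :=
  eqToIso (congrArg h.Fil h.lastI_succ) ≪≫ h.fil_last.some

lemma vanish (h : HNFiltration P E) {X : C} :
    ∀ i₀ : Fin (h.n + 1),
      (∀ i : Fin h.n, (i : ℕ) < (i₀ : ℕ) → ∀ u : h.A i ⟶ X, u = 0) →
      ∀ u : h.Fil i₀ ⟶ X, u = 0 := by
  intro i₀
  induction i₀ using Fin.induction with
  | zero => exact fun _ u => h.fil_zero.eq_of_src u 0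
  | succ i ih =>
    intro hA u
    have h1 : h.fmor i ≫ u = 0 :=
      ih (fun j hj v => hA j (by rw [Fin.val_succ]; rw [Fin.coe_castSucc] at hj; omega) v) _
    obtain ⟨v, hv⟩ := Triangle.yoneda_exact₂ _ (h.dist i) u h1
    rw [hv, hA i (by rw [Fin.val_succ]; omega) v]; exact comp_zero

lemma vanish_shift (h : HNFiltration P E) {X : C} :
    ∀ i₀ : Fin (h.n + 1),
      (∀ i : Fin h.n, (i : ℕ) < (i₀ : ℕ) → ∀ u : (h.A i)⟦(1 : ℤ)⟧ ⟶ X, u = 0) →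
      ∀ u : (h.Fil i₀)⟦(1 : ℤ)⟧ ⟶ X, u = 0 := by
  intro i₀
  induction i₀ using Fin.induction with
  | zero => exact fun _ u => ((shiftFunctor C (1 : ℤ)).map_isZero h.fil_zero).eq_of_src u 0
  | succ i ih =>
    intro hA u
    have h1 : (Triangle.mk (h.fmor i) (h.gmor i) (h.wmor i)).rotate.rotate.mor₂ ≫ u = 0 :=
      ih (fun j hj v => hA j (by rw [Fin.val_succ]; rw [Fin.coe_castSucc] at hj; omega) v)
        ((Triangle.mk (h.fmor i) (h.gmor i) (h.wmor i)).rotate.rotate.mor₂ ≫ u)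
    obtain ⟨g, hg⟩ := Triangle.yoneda_exact₃ _
      (rot_of_distTriang _ (rot_of_distTriang _ (h.dist i))) u h1
    rw [hg, hA i (by rw [Fin.val_succ]; omega) g]; exact comp_zero

variable {σ : PreStab C}

lemma homA_shift_zero (hs : IsStabCond σ) (h : HNFiltration σ.P E) {X : C} {ψ : ℝ}
    (hX : X ∈ σ.P ψ) (i : Fin h.n) (hi : ψ < h.phi i + 1) (u : (h.A i)⟦(1 : ℤ)⟧ ⟶ X) :
    u = 0 :=
  hs.sc3 (h.phi i + 1) ψ hi _ ((hs.sc2 _ _).mpr (h.A_mem i)) _ hX u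

lemma homA_zero (hs : IsStabCond σ) (h : HNFiltration σ.P E) {X : C} {ψ : ℝ}
    (hX : X ∈ σ.P ψ) (i : Fin h.n) (hi : ψ < h.phi i) (u : h.A i ⟶ X) : u = 0 :=
  hs.sc3 (h.phi i) ψ hi _ (h.A_mem i) _ hX u

lemma le_lastI (h : HNFiltration P E) (i : Fin h.n) : i ≤ h.lastI := by
  rw [Fin.le_def]
  have := i.2
  simp [lastI]
  omega

lemma gmor_lastI_ne_zero (hs : IsStabCond σ) (h : HNFiltration σ.P E) :
    h.gmor h.lastI ≠ 0 := by
  intro hg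
  obtain ⟨t, ht⟩ := Triangle.yoneda_exact₃ _ (h.dist h.lastI) (𝟙 (h.A h.lastI))
    ((Category.comp_id _).trans hg)
  have ht0 : t = 0 := by
    apply h.vanish_shift h.lastI.castSucc
    intro i _ u
    refine homA_shift_zero hs h (h.A_mem h.lastI) i ?_ u
    have := h.phi_anti.antitone (h.le_lastI i)
    linarith
  have hid : 𝟙 (h.A h.lastI) = 0 := by rw [ht, ht0]; exact comp_zero
  exact h.A_ne h.lastI ((Limits.IsZero.iff_id_eq_zero _).mpr hid)

lemma hom_from_E_zero (h : HNFiltration σ.P E) {X : C}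
    (hA : ∀ i : Fin h.n, ∀ u : h.A i ⟶ X, u = 0) (u : E ⟶ X) : u = 0 := by
  have hz := h.vanish (Fin.last h.n) (fun i _ => hA i) (h.fil_last.some.hom ≫ u)
  calc u = h.fil_last.some.inv ≫ (h.fil_last.some.hom ≫ u) := by simp
  _ = 0 := by rw [hz, comp_zero]

lemma cancel_g (hs : IsStabCond σ) (h : HNFiltration σ.P E) {X : C} {ψ : ℝ}
    (hX : X ∈ σ.P ψ) (hψ : ∀ i : Fin h.n, ψ < h.phi i + 1)
    {t t' : h.A h.lastI ⟶ X} (htt : h.gmor h.lastI ≫ t = h.gmor h.lastI ≫ t') : t = t' := by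
  have h0 : h.gmor h.lastI ≫ (t - t') = 0 := by rw [Preadditive.comp_sub, htt, sub_self]
  obtain ⟨s, hsx⟩ := Triangle.yoneda_exact₃ _ (h.dist h.lastI) (t - t') h0
  have hs0 : s = 0 := h.vanish_shift h.lastI.castSucc
    (fun i _ u => homA_shift_zero hs h hX i (hψ i) u) s
  have : t - t' = 0 := by rw [hsx, hs0]; exact comp_zero
  exact sub_eq_zero.mp this

lemma factor_g (hs : IsStabCond σ) (h : HNFiltration σ.P E) {X : C} {ψ : ℝ}
    (hX : X ∈ σ.P ψ) (hψ : ∀ i : Fin h.n, (i : ℕ) < h.n - 1 → ψ < h.phi i)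
    (v : h.Fil h.lastI.succ ⟶ X) : ∃ t : h.A h.lastI ⟶ X, v = h.gmor h.lastI ≫ t := by
  have h1 : h.fmor h.lastI ≫ v = 0 := h.vanish h.lastI.castSucc
    (fun i hi u => homA_zero hs h hX i (hψ i (by simpa [lastI] using hi)) u) _
  exact Triangle.yoneda_exact₂ _ (h.dist h.lastI) v h1

lemma bot_phase_not_lt (hs : IsStabCond σ) (h₁ h₂ : HNFiltration σ.P E) :
    ¬ h₂.phi h₂.lastI < h₁.phi h₁.lastI := by
  intro hlt
  have hne : h₂.topIso.inv ≫ h₂.gmor h₂.lastI ≠ 0 := by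
    intro h0
    apply gmor_lastI_ne_zero hs h₂
    have := congrArg (fun z => h₂.topIso.hom ≫ z) h0
    simpa using this
  apply hne
  apply hom_from_E_zero h₁
  intro i u
  refine hs.sc3 (h₁.phi i) (h₂.phi h₂.lastI)
    (lt_of_lt_of_le hlt (h₁.phi_anti.antitone (h₁.le_lastI i)))
    _ (h₁.A_mem i) _ (h₂.A_mem h₂.lastI) u

lemma bot_compare (hs : IsStabCond σ) (h₁ h₂ : HNFiltration σ.P E) :
    h₁.phi h₁.lastI = h₂.phi h₂.lastI ∧
      Nonempty (h₁.A h₁.lastI ≅ h₂.A h₂.lastI) ∧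
      Nonempty (h₁.Fil h₁.lastI.castSucc ≅ h₂.Fil h₂.lastI.castSucc) := by
  have hφ : h₁.phi h₁.lastI = h₂.phi h₂.lastI :=
    le_antisymm (not_lt.1 (bot_phase_not_lt hs h₁ h₂)) (not_lt.1 (bot_phase_not_lt hs h₂ h₁))
  refine ⟨hφ, ?_⟩
  have hA1 : h₁.A h₁.lastI ∈ σ.P (h₁.phi h₁.lastI) := h₁.A_mem h₁.lastI
  have hA2 : h₂.A h₂.lastI ∈ σ.P (h₁.phi h₁.lastI) := hφ ▸ h₂.A_mem h₂.lastI
  have hψ1 : ∀ i : Fin h₁.n, (i : ℕ) < h₁.n - 1 → h₁.phi h₁.lastI < h₁.phi i := by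
    intro i hi
    exact h₁.phi_anti (by rw [Fin.lt_def]; exact hi)
  have hψ1' : ∀ i : Fin h₁.n, h₁.phi h₁.lastI < h₁.phi i + 1 := by
    intro i
    have := h₁.phi_anti.antitone (h₁.le_lastI i)
    linarith
  have hψ2 : ∀ i : Fin h₂.n, (i : ℕ) < h₂.n - 1 → h₁.phi h₁.lastI < h₂.phi i := by
    intro i hi
    rw [hφ]
    exact h₂.phi_anti (by rw [Fin.lt_def]; exact hi)
  have hψ2' : ∀ i : Fin h₂.n, h₁.phi h₁.lastI < h₂.phi i + 1 := by
    intro i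
    rw [hφ]
    have := h₂.phi_anti.antitone (h₂.le_lastI i)
    linarith
  let ε : h₂.Fil h₂.lastI.succ ≅ h₁.Fil h₁.lastI.succ := h₂.topIso ≪≫ h₁.topIso.symm
  obtain ⟨f, hf⟩ := factor_g hs h₁ hA2 hψ1 (ε.inv ≫ h₂.gmor h₂.lastI)
  obtain ⟨f', hf'⟩ := factor_g hs h₂ hA1 hψ2 (ε.hom ≫ h₁.gmor h₁.lastI)
  have hff' : f ≫ f' = 𝟙 _ := by
    refine cancel_g hs h₁ hA1 hψ1' ?_
    rw [Category.comp_id]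
    calc h₁.gmor h₁.lastI ≫ f ≫ f' = (h₁.gmor h₁.lastI ≫ f) ≫ f' := by
          rw [Category.assoc]
      _ = (ε.inv ≫ h₂.gmor h₂.lastI) ≫ f' := by rw [← hf]
      _ = ε.inv ≫ (h₂.gmor h₂.lastI ≫ f') := by rw [Category.assoc]
      _ = ε.inv ≫ (ε.hom ≫ h₁.gmor h₁.lastI) := by rw [← hf']
      _ = h₁.gmor h₁.lastI := by simp
  have hf'f : f' ≫ f = 𝟙 _ := by
    refine cancel_g hs h₂ hA2 hψ2' ?_
    rw [Category.comp_id]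
    calc h₂.gmor h₂.lastI ≫ f' ≫ f = (h₂.gmor h₂.lastI ≫ f') ≫ f := by
          rw [Category.assoc]
      _ = (ε.hom ≫ h₁.gmor h₁.lastI) ≫ f := by rw [← hf']
      _ = ε.hom ≫ (h₁.gmor h₁.lastI ≫ f) := by rw [Category.assoc]
      _ = ε.hom ≫ (ε.inv ≫ h₂.gmor h₂.lastI) := by rw [← hf]
      _ = h₂.gmor h₂.lastI := by simp
  refine ⟨⟨⟨f, f', hff', hf'f⟩⟩, ?_⟩
  obtain ⟨c, hc1, hc2⟩ := Pretriangulated.complete_distinguished_triangle_morphism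
    (Triangle.mk (h₁.fmor h₁.lastI) (h₁.gmor h₁.lastI) (h₁.wmor h₁.lastI)).rotate
    (Triangle.mk (h₂.fmor h₂.lastI) (h₂.gmor h₂.lastI) (h₂.wmor h₂.lastI)).rotate
    (rot_of_distTriang _ (h₁.dist h₁.lastI)) (rot_of_distTriang _ (h₂.dist h₂.lastI))
    ε.inv f hf.symm
  let m := Triangle.homMk
    (Triangle.mk (h₁.fmor h₁.lastI) (h₁.gmor h₁.lastI) (h₁.wmor h₁.lastI)).rotate
    (Triangle.mk (h₂.fmor h₂.lastI) (h₂.gmor h₂.lastI) (h₂.wmor h₂.lastI)).rotate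
    ε.inv f c hf.symm hc1 hc2
  have hIso2 : IsIso f := ⟨⟨f', hff', hf'f⟩⟩
  haveI hIso3 : IsIso c := Pretriangulated.isIso₃_of_isIso₁₂ m
    (rot_of_distTriang _ (h₁.dist h₁.lastI)) (rot_of_distTriang _ (h₂.dist h₂.lastI))
    (show IsIso ε.inv from inferInstance) (by dsimp [m]; exact hIso2)
  exact ⟨(shiftFunctor C (1 : ℤ)).preimageIso (@asIso _ _ _ _ c hIso3)⟩

/-- Restriction of a HN filtration to its next-to-last step. -/
def restrict (h : HNFiltration P E) (hn : 2 ≤ h.n) :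
    HNFiltration P (h.Fil ⟨h.n - 1, by omega⟩) where
  n := h.n - 1
  npos := by omega
  Fil i := h.Fil ⟨i.1, by have := i.2; omega⟩
  A i := h.A ⟨i.1, by have := i.2; omega⟩
  phi i := h.phi ⟨i.1, by have := i.2; omega⟩
  fil_zero := by
    convert h.fil_zero using 2
    all_goals refine Fin.ext ?_
    all_goals simp
  fil_last := ⟨Iso.refl _⟩
  A_mem i := h.A_mem _
  A_ne i := h.A_ne _
  phi_anti := fun a b hab => h.phi_anti hab
  tri i := h.tri ⟨i.1, by have := i.2; omega⟩

/-- Change the target object of a HN filtration along an isomorphism. -/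
def changeTarget (h : HNFiltration P E) {E' : C} (e : E ≅ E') : HNFiltration P E' :=
  { h with fil_last := ⟨h.fil_last.some ≪≫ e⟩ }

lemma false_of_isZero (hs : IsStabCond σ) (h : HNFiltration σ.P E) (hE : IsZero E) :
    False :=
  gmor_lastI_ne_zero hs h ((hE.of_iso h.topIso).eq_of_src _ _)

end HNFiltration

open HNFiltration ZeroObject

variable {σ : PreStab C}

lemma Z_zero_of_zadd (hadd : ∀ T ∈ distTriang C, σ.Z T.obj₂ = σ.Z T.obj₁ + σ.Z T.obj₃) :
    σ.Z (0 : C) = 0 := by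
  have h1 := hadd _ (contractible_distinguished (0 : C))
  exact left_eq_add.mp h1

lemma Z_iso_of_zadd (hadd : ∀ T ∈ distTriang C, σ.Z T.obj₂ = σ.Z T.obj₁ + σ.Z T.obj₃)
    {X Y : C} (e : X ≅ Y) : σ.Z X = σ.Z Y := by
  have hd : Triangle.mk e.hom (0 : Y ⟶ (0 : C)) (0 : (0 : C) ⟶ X⟦(1 : ℤ)⟧) ∈ distTriang C :=
    Pretriangulated.isomorphic_distinguished _ (contractible_distinguished X) _
      (Triangle.isoMk _ _ (Iso.refl X) e.symm (Iso.refl _) (by simp; exact e.hom_inv_id.trans (Category.id_comp _).symm)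
        (by simp; exact zero_comp.trans comp_zero.symm) (by simp; exact zero_comp.trans comp_zero.symm))
  have h1 := hadd _ hd
  have h2 := Z_zero_of_zadd hadd
  change σ.Z Y = σ.Z X + σ.Z 0 at h1
  rw [h2, add_zero] at h1
  exact h1.symm

lemma Z_isZero_of_zadd (hadd : ∀ T ∈ distTriang C, σ.Z T.obj₂ = σ.Z T.obj₁ + σ.Z T.obj₃)
    {X : C} (hX : IsZero X) : σ.Z X = 0 := by
  rw [Z_iso_of_zadd hadd hX.isoZero, Z_zero_of_zadd hadd]

lemma sum_abs_of_n_eq_one (hadd : ∀ T ∈ distTriang C, σ.Z T.obj₂ = σ.Z T.obj₁ + σ.Z T.obj₃)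
    {E : C} (h : HNFiltration σ.P E) (hn : h.n = 1) :
    ∑ i, ‖σ.Z (h.A i)‖ = ‖σ.Z E‖ := by
  have hZ : σ.Z E = σ.Z (h.A ⟨0, h.npos⟩) := by
    have h1 : σ.Z (h.Fil (Fin.succ ⟨0, h.npos⟩)) =
        σ.Z (h.Fil (Fin.castSucc ⟨0, h.npos⟩)) + σ.Z (h.A ⟨0, h.npos⟩) :=
      hadd _ (h.dist ⟨0, h.npos⟩)
    have h2 : σ.Z (h.Fil (Fin.castSucc ⟨0, h.npos⟩)) = 0 := by
      refine Z_isZero_of_zadd hadd ?_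
      convert h.fil_zero using 2
      all_goals refine Fin.ext ?_
      all_goals simp
    have h3 : σ.Z E = σ.Z (h.Fil (Fin.succ ⟨0, h.npos⟩)) := by
      refine Z_iso_of_zadd hadd ?_
      have he : Fin.succ (⟨0, h.npos⟩ : Fin h.n) = Fin.last h.n := by
        refine Fin.ext ?_
        simp
        omega
      rw [he]
      exact h.fil_last.some.symm
    rw [h3, h1, h2, zero_add]
  rw [hZ]
  refine Fintype.sum_eq_single _ ?_
  intro b hb
  exact absurd (Fin.ext (show b.1 = 0 by have := b.2; omega)) hb

theorem hn_unique (hs : IsStabCond σ) :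
    ∀ (N : ℕ) (E : C) (h₁ h₂ : HNFiltration σ.P E), h₁.n = N →
      h₁.phi ⟨0, h₁.npos⟩ = h₂.phi ⟨0, h₂.npos⟩ ∧
      h₁.phi ⟨h₁.n - 1, Nat.sub_lt h₁.npos one_pos⟩ =
        h₂.phi ⟨h₂.n - 1, Nat.sub_lt h₂.npos one_pos⟩ ∧
      ∑ i, ‖σ.Z (h₁.A i)‖ = ∑ i, ‖σ.Z (h₂.A i)‖ := by
  intro N
  induction N using Nat.strong_induction_on with
  | _ N ih =>
    intro E h₁ h₂ hN
    obtain ⟨hbot, ⟨fiso⟩, ⟨ciso⟩⟩ := bot_compare hs h₁ h₂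
    by_cases hn1 : h₁.n = 1
    · have hzero1 : IsZero (h₁.Fil h₁.lastI.castSucc) := by
        convert h₁.fil_zero using 2
        all_goals refine Fin.ext ?_
        all_goals simp [HNFiltration.lastI]
        all_goals omega
      have hn2 : h₂.n = 1 := by
        by_contra hh
        exact false_of_isZero hs (h₂.restrict (by have := h₂.npos; omega))
          (hzero1.of_iso ciso.symm)
      refine ⟨?_, hbot, ?_⟩
      · have e1 : (⟨0, h₁.npos⟩ : Fin h₁.n) = h₁.lastI := by
          refine Fin.ext ?_
          simp [HNFiltration.lastI]
          omega
        have e2 : (⟨0, h₂.npos⟩ : Fin h₂.n) = h₂.lastI := by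
          refine Fin.ext ?_
          simp [HNFiltration.lastI]
          omega
        rw [e1, e2]
        exact hbot
      · rw [sum_abs_of_n_eq_one hs.zadd h₁ hn1, sum_abs_of_n_eq_one hs.zadd h₂ hn2]
    · have hn1' : 2 ≤ h₁.n := by have := h₁.npos; omega
      have hn2' : 2 ≤ h₂.n := by
        by_contra hh
        have hzero2 : IsZero (h₂.Fil h₂.lastI.castSucc) := by
          convert h₂.fil_zero using 2
          all_goals refine Fin.ext ?_
          all_goals simp [HNFiltration.lastI]
          all_goals omega
        exact false_of_isZero hs (h₁.restrict hn1') (hzero2.of_iso ciso)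
      obtain ⟨htop, hbot', hmass'⟩ := ih (h₁.n - 1) (by omega) _
        (h₁.restrict hn1') ((h₂.restrict hn2').changeTarget ciso.symm) rfl
      refine ⟨htop, hbot, ?_⟩
      rw [sum_split h₁.npos (fun i => ‖σ.Z (h₁.A i)‖),
        sum_split h₂.npos (fun i => ‖σ.Z (h₂.A i)‖)]
      exact congrArg₂ (· + ·) hmass'
        (congrArg (fun z : ℂ => ‖z‖) (Z_iso_of_zadd hs.zadd fiso))

end HNUniqueness

section MapFil

variable {C : Type u₂} [Category.{v₂} C] [Preadditive C] [HasZeroObject C] [HasShift C ℤ]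
  [∀ n : ℤ, (shiftFunctor C n).Additive] [Pretriangulated C] [HasFiniteBiproducts C]
  {D : Type u} [Category.{v} D] [Preadditive D] [HasZeroObject D] [HasShift D ℤ]
  [∀ n : ℤ, (shiftFunctor D n).Additive] [Pretriangulated D] [HasFiniteBiproducts D]

/-- Push a HN filtration for the pullback prestability condition forward along `p`. -/
def mapFil (p : C ⥤ D) [p.CommShift ℤ] [p.IsTriangulated]
    (hrefl : ∀ X : C, IsZero (p.obj X) → IsZero X)
    (σ : PreStab D) {E : C} (h : HNFiltration (pushforward p σ).P E) :
    HNFiltration σ.P (p.obj E) where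
  n := h.n
  npos := h.npos
  Fil i := p.obj (h.Fil i)
  A i := p.obj (h.A i)
  phi := h.phi
  fil_zero := p.map_isZero h.fil_zero
  fil_last := ⟨p.mapIso h.fil_last.some⟩
  A_mem i := h.A_mem i
  A_ne i := fun hz => h.A_ne i (hrefl _ hz)
  phi_anti := h.phi_anti
  tri i := by
    obtain ⟨f, g, w, hT⟩ := h.tri i
    exact ⟨p.map f, p.map g, p.map w ≫ (p.commShiftIso (1 : ℤ)).hom.app _,
      p.map_distinguished _ hT⟩

end MapFil

/-- In the Galois setup, if the pullback pairs `p^* σ'` and `p^* τ'`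
of `σ', τ' ∈ Stab(T)` are locally finite stability conditions on `T_L`, then
`d(p^* σ', p^* τ') ≤ d(σ', τ')` in `[0, ∞]`. -/
theorem statement_1
    {C₁ : Type u} [Category.{v} C₁] [Preadditive C₁] [HasZeroObject C₁] [HasShift C₁ ℤ]
    [∀ n : ℤ, (shiftFunctor C₁ n).Additive] [Pretriangulated C₁] [HasFiniteBiproducts C₁]
    {C₂ : Type u₂} [Category.{v₂} C₂] [Preadditive C₂] [HasZeroObject C₂] [HasShift C₂ ℤ]
    [∀ n : ℤ, (shiftFunctor C₂ n).Additive] [Pretriangulated C₂] [HasFiniteBiproducts C₂]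
    {G : Type} [Group G] [Fintype G]
    (pstar : C₁ ⥤ C₂) [pstar.CommShift ℤ] [pstar.IsTriangulated]
    (plow : C₂ ⥤ C₁) [plow.CommShift ℤ] [plow.IsTriangulated]
    (gst : G → C₂ ⥤ C₂) [∀ g : G, (gst g).CommShift ℤ] [∀ g : G, (gst g).IsTriangulated]
    [∀ g : G, (gst g).IsEquivalence]
    (actOne : gst 1 ≅ 𝟭 C₂) (actMul : ∀ g h : G, gst h ⋙ gst g ≅ gst (g * h))
    (pIso : ∀ g : G, pstar ≅ pstar ⋙ gst g)
    (pIsoCocycle : ∀ (g h : G) (E : C₁), (pIso (g * h)).hom.app E =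
      (pIso g).hom.app E ≫ (gst g).map ((pIso h).hom.app E) ≫ (actMul g h).hom.app (pstar.obj E))
    (qIso : ∀ g : G, gst g ⋙ plow ≅ plow)
    (ppIso : ∀ E : C₁, plow.obj (pstar.obj E) ≅ ⨁ (fun _ : G => E))
    (ppNat : ∀ {E F : C₁} (f : E ⟶ F),
      plow.map (pstar.map f) ≫ (ppIso F).hom = (ppIso E).hom ≫ biproduct.map (fun _ => f))
    (qpIso : ∀ X : C₂, pstar.obj (plow.obj X) ≅ ⨁ (fun g : G => (gst g).obj X))
    (qpNat : ∀ {X Y : C₂} (f : X ⟶ Y),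
      pstar.map (plow.map f) ≫ (qpIso Y).hom = (qpIso X).hom ≫ biproduct.map (fun g => (gst g).map f))
    (σ' τ' : Stab C₁)
    (hσ : IsStabilityCondition (pushforward plow σ'.1))
    (hτ : IsStabilityCondition (pushforward plow τ'.1)) :
    stabDist (pushforward plow σ'.1) (pushforward plow τ'.1) ≤ stabDist σ'.1 τ'.1 := by
  have hrefl : ∀ X : C₂, IsZero (plow.obj X) → IsZero X := by
    intro X hX
    have h1 : IsZero (⨁ fun g : G => (gst g).obj X) :=
      IsZero.of_iso (pstar.map_isZero hX) (qpIso X).symm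
    have h2 : IsZero ((gst (1 : G)).obj X) := by
      rw [Limits.IsZero.iff_id_eq_zero]
      rw [← biproduct.ι_π_self (fun g : G => (gst g).obj X) (1 : G)]
      rw [h1.eq_of_tgt (biproduct.ι (fun g : G => (gst g).obj X) (1 : G)) 0, zero_comp]
    exact IsZero.of_iso h2 (actOne.app X).symm
  have key : ∀ (υ : Stab C₁), IsStabilityCondition (pushforward plow υ.1) →
      ∀ (E : C₂), ¬ IsZero E →
      phiMinus (pushforward plow υ.1) E = phiMinus υ.1 (plow.obj E) ∧
      phiPlus (pushforward plow υ.1) E = phiPlus υ.1 (plow.obj E) ∧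
      mass (pushforward plow υ.1) E = mass υ.1 (plow.obj E) := by
    intro υ hυ E hE
    obtain ⟨h₀⟩ := hυ.1.sc4 E hE
    refine ⟨?_, ?_, ?_⟩
    · refine sSup_sub_eq _ _ ?_ ?_ ?_
      · rintro x ⟨h, rfl⟩
        exact ⟨mapFil plow hrefl υ.1 h, rfl⟩
      · exact ⟨_, h₀, rfl⟩
      · rintro x ⟨hx, rfl⟩ y ⟨hy, rfl⟩
        exact (hn_unique υ.2.1 hx.n _ hx hy rfl).2.1
    · refine sSup_sub_eq _ _ ?_ ?_ ?_
      · rintro x ⟨h, rfl⟩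
        exact ⟨mapFil plow hrefl υ.1 h, rfl⟩
      · exact ⟨_, h₀, rfl⟩
      · rintro x ⟨hx, rfl⟩ y ⟨hy, rfl⟩
        exact (hn_unique υ.2.1 hx.n _ hx hy rfl).1
    · refine sSup_sub_eq _ _ ?_ ?_ ?_
      · rintro x ⟨h, rfl⟩
        exact ⟨mapFil plow hrefl υ.1 h, rfl⟩
      · exact ⟨_, h₀, rfl⟩
      · rintro x ⟨hx, rfl⟩ y ⟨hy, rfl⟩
        exact (hn_unique υ.2.1 hx.n _ hx hy rfl).2.2
  unfold stabDist
  refine iSup_le ?_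
  intro E
  obtain ⟨hσ1, hσ2, hσ3⟩ := key σ' hσ E.1 E.2
  obtain ⟨hτ1, hτ2, hτ3⟩ := key τ' hτ E.1 E.2
  rw [hσ1, hσ2, hσ3, hτ1, hτ2, hτ3]
  exact le_iSup_of_le ⟨plow.obj E.1, fun hz => E.2 (hrefl E.1 hz)⟩ le_rfl

end StabilityPaper
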